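/- There exist constants C > 0 and δ₀ ∈ (0,1) such that for all δ ∈ (0, δ₀), all s ∈ ℝ with |s| < δ, and all g ∈ SL₂(ℝ) with ‖g‖ > 3, g·i ≠ i and (a_s g)·i ≠ i, one has |θ_{a_s g} − θ_g| ≤ C·δ. -/

import Mathlib

open Matrix MeasureTheory Real Filter Topology
open scoped MatrixGroups Pointwise

noncomputable section

/-- `SL(2,ℝ)` as the special linear group of 2×2 real matrices. -/
abbrev SL2R := Matrix.SpecialLinearGroup (Fin 2) ℝ

instance : TopologicalSpace SL2R :=
  show TopologicalSpace {A : Matrix (Fin 2) (Fin 2) ℝ // A.det = 1} from inferInstance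

instance : MeasurableSpace SL2R := borel SL2R

/-- Squared Frobenius norm `‖g‖² = a² + b² + c² + d²`. -/
def fnormSq (g : SL2R) : ℝ :=
  (g : Matrix (Fin 2) (Fin 2) ℝ) 0 0 ^ 2 + (g : Matrix (Fin 2) (Fin 2) ℝ) 0 1 ^ 2
    + (g : Matrix (Fin 2) (Fin 2) ℝ) 1 0 ^ 2 + (g : Matrix (Fin 2) (Fin 2) ℝ) 1 1 ^ 2

/-- Frobenius norm `‖g‖`. -/
def fnorm (g : SL2R) : ℝ := Real.sqrt (fnormSq g)

/-- The angle `θ_g = arg((g·i − i)/(g·i + i)) ∈ (−π, π]`; equals `0` when `g·i = i`. -/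
def theta (g : SL2R) : ℝ :=
  Complex.arg ((((g • UpperHalfPlane.I : UpperHalfPlane) : ℂ) - Complex.I)
    / (((g • UpperHalfPlane.I : UpperHalfPlane) : ℂ) + Complex.I))

/-- Distance between two angles: the distance from `a − b` to the nearest element of `2πℤ`. -/
def angDist (a b : ℝ) : ℝ := |((a - b : ℝ) : Real.Angle).toReal|

/-- Inverse hyperbolic cosine. -/
def arccosh (x : ℝ) : ℝ := Real.log (x + Real.sqrt (x ^ 2 - 1))

/-- `ℓ(M) = arccosh(‖M‖²/2)`, the hyperbolic distance from `i` to `M·i`. -/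
def ell (M : SL2R) : ℝ := arccosh (fnormSq M / 2)

/-- The pair-correlation density building block `f_ξ(ℓ)`. -/
def fxi (ξ l : ℝ) : ℝ :=
  if Real.sinh l ≤ ξ then 2 / ξ ^ 2 * l
  else if 2 * Real.sinh (l / 2) ≤ ξ then
    2 / ξ ^ 2 * (l + Real.log (1 + ξ ^ 2)
      - 2 * Real.log (Real.cosh l + Real.sqrt (Real.sinh l ^ 2 - ξ ^ 2)))
  else 2 / ξ ^ 2 * (l - Real.log (Real.cosh l + Real.sqrt (Real.sinh l ^ 2 - ξ ^ 2)))

/-- The rotation matrix `k_φ ∈ SL(2,ℝ)`. -/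
def kMat (φ : ℝ) : SL2R :=
  ⟨!![Real.cos (φ / 2), Real.sin (φ / 2); -Real.sin (φ / 2), Real.cos (φ / 2)], by
    rw [Matrix.det_fin_two_of]
    linear_combination Real.sin_sq_add_cos_sq (φ / 2)⟩

/-- The diagonal matrix `a_t ∈ SL(2,ℝ)`. -/
def aMat (t : ℝ) : SL2R :=
  ⟨!![Real.exp (t / 2), 0; 0, Real.exp (-t / 2)], by
    rw [Matrix.det_fin_two_of, ← Real.exp_add]
    norm_num
    ring⟩

-- ===== auxiliary lemmas =====

lemma tlp_sin_abs_eq (x : ℝ) (h : |x| ≤ π) : Real.sin |x| = |Real.sin x| := by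
  rcases abs_cases x with ⟨h1, h2⟩ | ⟨h1, h2⟩
  · rw [h1, _root_.abs_of_nonneg (Real.sin_nonneg_of_nonneg_of_le_pi h2 (h1 ▸ h))]
  · rw [h1, Real.sin_neg, _root_.abs_of_nonpos]
    have : Real.sin (-x) ≥ 0 := Real.sin_nonneg_of_nonneg_of_le_pi (by linarith) (h1 ▸ h)
    rw [Real.sin_neg] at this; linarith

lemma tlp_arg_abs_le (ζ : ℂ) (hre : 0 ≤ ζ.re) (hζ : ζ ≠ 0) :
    |Complex.arg ζ| ≤ π / 2 * (|ζ.im| / ‖ζ‖) := by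
  have habs : 0 < ‖ζ‖ := norm_pos_iff.mpr hζ
  have h1 : |Complex.arg ζ| ≤ π / 2 := Complex.abs_arg_le_pi_div_two_iff.2 hre
  have h2 : 2 / π * |Complex.arg ζ| ≤ Real.sin |Complex.arg ζ| :=
    Real.mul_le_sin (abs_nonneg _) h1
  have h3 : Real.sin |Complex.arg ζ| = |Real.sin (Complex.arg ζ)| :=
    tlp_sin_abs_eq _ (le_trans h1 (by linarith [pi_pos]))
  have h4 : Real.sin (Complex.arg ζ) = ζ.im / ‖ζ‖ := Complex.sin_arg ζ
  have h5 : |Real.sin (Complex.arg ζ)| = |ζ.im| / ‖ζ‖ := by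
    rw [h4, abs_div, _root_.abs_of_pos habs]
  have hπ := pi_pos
  rw [h3, h5] at h2
  have := mul_le_mul_of_nonneg_left h2 (le_of_lt (by positivity : (0:ℝ) < π / 2))
  calc |Complex.arg ζ| = π / 2 * (2 / π * |Complex.arg ζ|) := by field_simp
    _ ≤ π / 2 * (|ζ.im| / ‖ζ‖) := this

lemma tlp_arg_div_bound (u v : ℂ) (hu : u ≠ 0) (hv : v ≠ 0)
    (h : ‖u - v‖ ≤ ‖v‖ / 2) :
    |Complex.arg (u / v)| ≤ π * (‖u - v‖ / ‖v‖) := by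
  have hπ := pi_pos
  have hav : 0 < ‖v‖ := norm_pos_iff.mpr hv
  set ζ := u / v with hζdef
  have hζ : ζ ≠ 0 := div_ne_zero hu hv
  have hsub : ζ - 1 = (u - v) / v := by rw [hζdef]; field_simp
  have habs1 : ‖ζ - 1‖ ≤ 1 / 2 := by
    rw [hsub, norm_div]
    rw [div_le_div_iff₀ hav (by norm_num)] at *
    linarith [h]
  have hre : (1:ℝ)/2 ≤ ζ.re := by
    have : |(ζ - 1).re| ≤ ‖ζ - 1‖ := Complex.abs_re_le_norm _
    have hre1 : (ζ - 1).re = ζ.re - 1 := by simp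
    rw [hre1] at this
    cases' abs_le.1 this with hl hr
    linarith
  have him : |ζ.im| ≤ ‖u - v‖ / ‖v‖ := by
    have : |(ζ - 1).im| ≤ ‖ζ - 1‖ := Complex.abs_im_le_norm _
    have him1 : (ζ - 1).im = ζ.im := by simp
    rw [him1, hsub, norm_div] at this
    exact this
  have hζabs : (1:ℝ)/2 ≤ ‖ζ‖ := le_trans hre (Complex.re_le_norm ζ)
  have := tlp_arg_abs_le ζ (by linarith) hζ
  calc |Complex.arg ζ| ≤ π / 2 * (|ζ.im| / ‖ζ‖) := this
    _ ≤ π / 2 * ((‖u - v‖ / ‖v‖) / (1/2)) := by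
        apply mul_le_mul_of_nonneg_left _ (by positivity)
        apply div_le_div₀ (by positivity) him (by norm_num) hζabs
    _ = π * (‖u - v‖ / ‖v‖) := by ring

lemma tlp_smul_coe (g : SL2R) (z : UpperHalfPlane) :
    ((g • z : UpperHalfPlane) : ℂ) =
      (((g : Matrix (Fin 2) (Fin 2) ℝ) 0 0 : ℂ) * z + ((g : Matrix (Fin 2) (Fin 2) ℝ) 0 1 : ℂ)) /
      (((g : Matrix (Fin 2) (Fin 2) ℝ) 1 0 : ℂ) * z + ((g : Matrix (Fin 2) (Fin 2) ℝ) 1 1 : ℂ)) := by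
  rw [UpperHalfPlane.specialLinearGroup_apply]
  simp [UpperHalfPlane.coe_mk]

lemma tlp_aMat_smul_coe (s : ℝ) (z : UpperHalfPlane) :
    ((aMat s • z : UpperHalfPlane) : ℂ) = Real.exp s * (z : ℂ) := by
  rw [tlp_smul_coe]
  simp only [aMat, Matrix.SpecialLinearGroup.coe_mk, Matrix.cons_val', Matrix.cons_val_zero,
    Matrix.cons_val_one, Matrix.head_cons, Matrix.head_fin_const, Matrix.empty_val',
    Matrix.cons_val_fin_one, Matrix.of_apply]
  push_cast
  rw [zero_mul, zero_add, add_zero, div_eq_iff (Complex.exp_ne_zero _)]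
  rw [show Complex.exp ↑s * ↑z * Complex.exp (-↑s / 2) =
    ↑z * (Complex.exp ↑s * Complex.exp (-↑s / 2)) by ring, ← Complex.exp_add]
  ring_nf

lemma tlp_factA (g : SL2R) :
    Complex.normSq ((g • UpperHalfPlane.I : UpperHalfPlane) : ℂ) + 1 =
      fnormSq g * ((g • UpperHalfPlane.I : UpperHalfPlane) : ℂ).im := by
  set a := (g : Matrix (Fin 2) (Fin 2) ℝ) 0 0
  set b := (g : Matrix (Fin 2) (Fin 2) ℝ) 0 1
  set c := (g : Matrix (Fin 2) (Fin 2) ℝ) 1 0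
  set d := (g : Matrix (Fin 2) (Fin 2) ℝ) 1 1
  have hdet : a * d - b * c = 1 := by
    have := g.prop
    rwa [Matrix.det_fin_two] at this
  have hcd : c ^ 2 + d ^ 2 ≠ 0 := by
    intro h
    have hc : c = 0 := by nlinarith [sq_nonneg c, sq_nonneg d]
    have hd : d = 0 := by nlinarith [sq_nonneg c, sq_nonneg d]
    rw [hc, hd] at hdet; norm_num at hdet
  have hZ := tlp_smul_coe g UpperHalfPlane.I
  rw [UpperHalfPlane.coe_I] at hZ
  rw [hZ]
  have hnum : ((a:ℂ) * Complex.I + (b:ℂ)) = Complex.mk b a := by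
    apply Complex.ext <;> simp
  have hden : ((c:ℂ) * Complex.I + (d:ℂ)) = Complex.mk d c := by
    apply Complex.ext <;> simp
  rw [hnum, hden, map_div₀, Complex.div_im]
  simp only [Complex.normSq_mk, Complex.im, Complex.re, fnormSq]
  have hcd2 : d * d + c * c ≠ 0 := by intro h; apply hcd; nlinarith
  rw [mul_sub, ← mul_div_assoc, ← mul_div_assoc, div_sub_div_same, ← mul_sub, hdet]
  have hcd3 : d ^ 2 + c ^ 2 ≠ 0 := by rwa [add_comm]
  simp only [show (g : Matrix (Fin 2) (Fin 2) ℝ) 0 0 = a from rfl, show (g : Matrix (Fin 2) (Fin 2) ℝ) 0 1 = b from rfl, show (g : Matrix (Fin 2) (Fin 2) ℝ) 1 0 = c from rfl, show (g : Matrix (Fin 2) (Fin 2) ℝ) 1 1 = d from rfl]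
  field_simp
  ring


set_option maxHeartbeats 1000000 in
/-- Lemma 2.6: left multiplication by `a_s`, `|s| < δ`, changes the
angle `θ_g` by at most `O(δ)`. -/
theorem theta_left_perturbation :
    ∃ C > (0:ℝ), ∃ δ₀ : ℝ, 0 < δ₀ ∧ δ₀ < 1 ∧
      ∀ δ s : ℝ, 0 < δ → δ < δ₀ → |s| < δ → ∀ g : SL2R,
        3 < fnorm g →
        g • UpperHalfPlane.I ≠ UpperHalfPlane.I →
        (aMat s * g) • UpperHalfPlane.I ≠ UpperHalfPlane.I →
        angDist (theta (aMat s * g)) (theta g) ≤ C * δ := by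
  refine ⟨100, by norm_num, 1/20, by norm_num, by norm_num, ?_⟩
  intro δ s hδ hδ20 hs g hg hne hne'
  set Z : ℂ := ((g • UpperHalfPlane.I : UpperHalfPlane) : ℂ) with hZdef
  set y : ℝ := Z.im with hydef
  have hy : 0 < y := (g • UpperHalfPlane.I).im_pos
  have hZne : Z ≠ 0 := by
    intro h
    rw [hydef, h] at hy
    simp at hy
  set E : ℝ := Real.exp s with hEdef
  have hE : 0 < E := Real.exp_pos s
  have hZ' : (((aMat s * g) • UpperHalfPlane.I : UpperHalfPlane) : ℂ) = (E : ℂ) * Z := by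
    rw [mul_smul, tlp_aMat_smul_coe, ← hZdef]
  set u : ℂ := ((E:ℂ) * Z - Complex.I) / ((E:ℂ) * Z + Complex.I) with hudef
  set v : ℂ := (Z - Complex.I) / (Z + Complex.I) with hvdef
  -- nonvanishing of denominators
  have hZI : Z + Complex.I ≠ 0 := by
    intro h
    have : (Z + Complex.I).im = y + 1 := by simp [hydef]
    rw [h] at this; simp at this; linarith
  have hZI' : (E:ℂ) * Z + Complex.I ≠ 0 := by
    intro h
    have : ((E:ℂ) * Z + Complex.I).im = E * y + 1 := by simp [hydef]
    rw [h] at this; simp at this; nlinarith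
  -- nonvanishing of numerators
  have hvnum : Z - Complex.I ≠ 0 := by
    rw [sub_ne_zero]
    intro h
    exact hne (UpperHalfPlane.ext (by rw [← hZdef, h]; rfl))
  have hunum : (E:ℂ) * Z - Complex.I ≠ 0 := by
    rw [sub_ne_zero]
    intro h
    exact hne' (UpperHalfPlane.ext (by rw [hZ', h]; rfl))
  have hu : u ≠ 0 := div_ne_zero hunum hZI'
  have hv : v ≠ 0 := div_ne_zero hvnum hZI
  -- norm-squared computations
  have hnsZI : Complex.normSq (Z + Complex.I) = Complex.normSq Z + 2 * y + 1 := by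
    simp [Complex.normSq_apply, hydef]; ring
  have hnsZmI : Complex.normSq (Z - Complex.I) = Complex.normSq Z - 2 * y + 1 := by
    simp [Complex.normSq_apply, hydef]; ring
  have hnsEZ : Complex.normSq ((E:ℂ) * Z + Complex.I) = E^2 * Complex.normSq Z + 2 * E * y + 1 := by
    simp [Complex.normSq_apply, hydef]; ring
  -- fnormSq bound
  have hfn9 : 9 < fnormSq g := by
    have h0 : 0 ≤ fnormSq g := by
      simp only [fnormSq]; positivity
    have := hg
    rw [fnorm] at this
    nlinarith [Real.sq_sqrt h0, Real.sqrt_nonneg (fnormSq g)]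
  have hfA : Complex.normSq Z + 1 = fnormSq g * y := tlp_factA g
  have h9y : 9 * y < Complex.normSq Z + 1 := by
    rw [hfA]; nlinarith
  -- lower bound on |v|
  have hnsZ : 0 ≤ Complex.normSq Z := Complex.normSq_nonneg Z
  have habsv : 7/10 ≤ ‖v‖ := by
    have hnsv : Complex.normSq v = (Complex.normSq Z - 2*y + 1) / (Complex.normSq Z + 2*y + 1) := by
      rw [hvdef, map_div₀, hnsZI, hnsZmI]
    have hden_pos : 0 < Complex.normSq Z + 2*y + 1 := by nlinarith
    have h711 : (49:ℝ)/100 ≤ Complex.normSq v := by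
      rw [hnsv, le_div_iff₀ hden_pos]; nlinarith
    nlinarith [norm_nonneg v, Complex.sq_norm v]
  -- bound |u - v|
  have hdiffeq : u - v = 2 * Complex.I * ((E:ℂ) * Z - Z) / ((Z + Complex.I) * ((E:ℂ) * Z + Complex.I)) := by
    rw [hudef, hvdef]
    field_simp
    ring
  have hEm1 : |E - 1| ≤ 2 * δ := by
    have hs1 : |s| ≤ 1 := by linarith [abs_nonneg s]
    have := Real.abs_exp_sub_one_le hs1
    rw [← hEdef] at this
    linarith [abs_nonneg s]
  have habsZle : ‖Z‖ ≤ ‖Z + Complex.I‖ := by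
    rw [Complex.norm_def, Complex.norm_def]
    apply Real.sqrt_le_sqrt
    rw [hnsZI]; nlinarith
  have habsEZ : 1 ≤ ‖(E:ℂ) * Z + Complex.I‖ := by
    rw [Complex.norm_def]
    rw [show (1:ℝ) = Real.sqrt 1 by simp]
    apply Real.sqrt_le_sqrt
    rw [hnsEZ]; nlinarith
  have habsdiff : ‖u - v‖ ≤ 4 * δ := by
    rw [hdiffeq, norm_div, norm_mul, norm_mul]
    have h1 : ‖(E:ℂ) * Z - Z‖ = |E - 1| * ‖Z‖ := by
      rw [show (E:ℂ) * Z - Z = ((E - 1 : ℝ) : ℂ) * Z by push_cast; ring, norm_mul,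
        Complex.norm_real, Real.norm_eq_abs]
    have h2 : ‖(2 : ℂ)‖ = 2 := by simp
    have h3 : ‖Complex.I‖ = 1 := Complex.norm_I
    rw [h1, h2, h3, norm_mul]
    have habsZpos : 0 < ‖Z‖ := norm_pos_iff.mpr hZne
    have hZIpos : 0 < ‖Z + Complex.I‖ := norm_pos_iff.mpr hZI
    have hEZIpos : 0 < ‖(E:ℂ) * Z + Complex.I‖ := norm_pos_iff.mpr hZI'
    rw [div_le_iff₀ (by positivity)]
    have hEm1nn : 0 ≤ |E - 1| := abs_nonneg _
    have step1 : |E - 1| * ‖Z‖ ≤ (2*δ) * ‖Z‖ :=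
      mul_le_mul_of_nonneg_right hEm1 habsZpos.le
    have step2 : ‖Z‖ ≤ ‖Z + Complex.I‖ * ‖(E:ℂ) * Z + Complex.I‖ :=
      le_trans habsZle (le_mul_of_one_le_right hZIpos.le habsEZ)
    have step3 : (4*δ) * ‖Z‖ ≤ (4*δ) * (‖Z + Complex.I‖ * ‖(E:ℂ) * Z + Complex.I‖) :=
      mul_le_mul_of_nonneg_left step2 (by positivity)
    linarith
  have hhalf : ‖u - v‖ ≤ ‖v‖ / 2 := by linarith
  -- angle identity
  have hargeq : ((Complex.arg u - Complex.arg v : ℝ) : Real.Angle)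
      = ((Complex.arg (u / v) : ℝ) : Real.Angle) := by
    rw [Real.Angle.coe_sub, ← Complex.arg_div_coe_angle hu hv]
  have hth1 : theta (aMat s * g) = Complex.arg u := by
    rw [theta, hZ']
  have hth2 : theta g = Complex.arg v := rfl
  rw [angDist, hth1, hth2, hargeq,
    Real.Angle.toReal_coe_eq_self_iff.2 ⟨Complex.neg_pi_lt_arg _, Complex.arg_le_pi _⟩]
  have hbound := tlp_arg_div_bound u v hu hv hhalf
  have hπ4 : π ≤ 4 := Real.pi_le_four
  have hπ0 : 0 < π := Real.pi_pos
  have havpos : (0:ℝ) < ‖v‖ := by linarith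
  have hdivle : ‖u - v‖ / ‖v‖ ≤ (4 * δ) / (7/10) := by
    apply div_le_div₀ (by positivity) habsdiff (by norm_num) habsv
  calc |Complex.arg (u / v)| ≤ π * (‖u - v‖ / ‖v‖) := hbound
    _ ≤ 4 * ((4 * δ) / (7/10)) := by
        apply mul_le_mul hπ4 hdivle (by positivity) (by norm_num)
    _ ≤ 100 * δ := by nlinarith
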